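/- Nondegeneracy and two-sided bounds for the Lopatinskii determinant of the Lamé system in the half-plane: let μ > 0 and λ ∈ ℝ with λ + μ > 0, and set ν := λ + 2μ. For (τ, ξ₁) ∈ ℝ², let λ₁ := √(iτ/ν + ξ₁²) and λ₂ := √(iτ/μ + ξ₁²) (square roots with nonnegative real part), and define det𝒜(τ, ξ₁) := (iτ + 2μξ₁²)² − 4μ²ξ₁²λ₁λ₂. Then det𝒜(τ, ξ₁) = 0 if and only if τ = 0, and there exist real constants 0 < c < C (depending only on μ, λ) such that for all (τ, ξ₁) ∈ ℝ², c |τ| √(τ² + μ²ξ₁⁴) ≤ |det𝒜(τ, ξ₁)| ≤ C (τ² + μ²ξ₁⁴). -/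

import Mathlib

set_option maxHeartbeats 1000000
noncomputable section

/-- The principal square root `√w` with nonnegative real part (and `√0 = 0`),
realized as the principal power `w^{1/2}`. -/
def csqrt (w : ℂ) : ℂ := w ^ ((1:ℂ)/2)

/-- The Lopatinskii determinant of the Lamé system in the half-plane:
`det𝒜(τ,ξ₁) = (iτ + 2μξ₁²)² − 4μ²ξ₁²λ₁λ₂` where `λ₁ = √(iτ/ν + ξ₁²)`,
`λ₂ = √(iτ/μ + ξ₁²)` and `ν = λ + 2μ`. -/
def lameDet (μ lam : ℝ) (τ ξ : ℝ) : ℂ :=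
  (Complex.I * (τ:ℂ) + 2 * (μ:ℂ) * (ξ:ℂ)^2)^2
    - 4 * (μ:ℂ)^2 * (ξ:ℂ)^2
        * csqrt (Complex.I * (τ:ℂ) / ((lam:ℂ) + 2 * (μ:ℂ)) + (ξ:ℂ)^2)
        * csqrt (Complex.I * (τ:ℂ) / (μ:ℂ) + (ξ:ℂ)^2)

lemma csqrt_mul_self (w : ℂ) : csqrt w * csqrt w = w := by
  by_cases h : w = 0
  · simp [csqrt, h, Complex.zero_cpow]
  · rw [csqrt, ← Complex.cpow_add _ _ h]
    norm_num

lemma poly_lower (μ B D : ℝ) (hμ : 0 < μ) (hD : 0 < D) (hne : D ≠ 8*μ*B) :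
    ∃ m : ℝ, 0 < m ∧ ∀ s t : ℝ, 0 ≤ s → 0 ≤ t →
      m * (s + μ^2*t)^3 ≤ t*(D*t-8*μ*s)^2 + s*(B*t-s)^2 := by
  set g : ℝ → ℝ := fun t => t*(D*t-8*μ*(1-μ^2*t))^2 + (1-μ^2*t)*(B*t-(1-μ^2*t))^2 with hg
  have hgc : Continuous g := by fun_prop
  have hμ2 : (0:ℝ) < μ^2 := by positivity
  obtain ⟨t₀, ht₀, hmin⟩ := isCompact_Icc.exists_isMinOn (s := Set.Icc (0:ℝ) (1/μ^2))
    ⟨0, by constructor <;> positivity⟩ hgc.continuousOn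
  have hmin' : ∀ y ∈ Set.Icc (0:ℝ) (1/μ^2), g t₀ ≤ g y := hmin
  have hs₀ : 0 ≤ 1 - μ^2*t₀ := by
    have := ht₀.2
    rw [le_div_iff₀ hμ2] at this
    nlinarith
  have hm : 0 < g t₀ := by
    rcases lt_or_eq_of_le ht₀.1 with ht | ht
    · rcases lt_or_eq_of_le hs₀ with hs | hs
      · rcases eq_or_ne (D*t₀ - 8*μ*(1-μ^2*t₀)) 0 with hA | hA
        · have hC : B*t₀ - (1-μ^2*t₀) ≠ 0 := by
            intro hC
            apply hne
            have ht₀' : t₀ ≠ 0 := ne_of_gt ht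
            have : D*t₀ = 8*μ*(B*t₀) := by nlinarith
            field_simp at this
            nlinarith
          have : 0 < (1-μ^2*t₀)*(B*t₀-(1-μ^2*t₀))^2 := by positivity
          have h1 : 0 ≤ t₀*(D*t₀-8*μ*(1-μ^2*t₀))^2 := by positivity
          simp only [hg]
          nlinarith
        · have : 0 < t₀*(D*t₀-8*μ*(1-μ^2*t₀))^2 := by positivity
          have h1 : 0 ≤ (1-μ^2*t₀)*(B*t₀-(1-μ^2*t₀))^2 := by positivity
          simp only [hg]
          nlinarith
      · have : 0 < t₀*(D*t₀-8*μ*(1-μ^2*t₀))^2 := by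
          rw [← hs]
          have : D*t₀ - 8*μ*0 > 0 := by nlinarith
          positivity
        simp only [hg]
        nlinarith [this]
    · simp only [hg, ← ht]
      norm_num
  refine ⟨g t₀, hm, fun s t hs ht => ?_⟩
  rcases eq_or_lt_of_le (by positivity : (0:ℝ) ≤ s + μ^2*t) with hr | hr
  · have hs0 : s = 0 := by nlinarith
    have ht0 : t = 0 := by nlinarith
    simp [hs0, ht0]
  · set r := s + μ^2*t with hrdef
    have htmem : t/r ∈ Set.Icc (0:ℝ) (1/μ^2) := by
      constructor
      · positivity
      · rw [div_le_div_iff₀ hr hμ2]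
        nlinarith
    have hkey : t*(D*t-8*μ*s)^2 + s*(B*t-s)^2 = r^3 * g (t/r) := by
      have hsr : s = r*(1 - μ^2*(t/r)) := by
        field_simp
        ring
      have htr : t = r*(t/r) := by field_simp
      calc t*(D*t-8*μ*s)^2 + s*(B*t-s)^2
          = (r*(t/r))*(D*(r*(t/r))-8*μ*(r*(1 - μ^2*(t/r))))^2
            + (r*(1 - μ^2*(t/r)))*(B*(r*(t/r))-(r*(1 - μ^2*(t/r))))^2 := by
            rw [← hsr, ← htr]
        _ = r^3 * g (t/r) := by simp only [hg]; ring
    rw [hkey]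
    have h := hmin' _ htmem
    calc g t₀ * r^3 ≤ g (t/r) * r^3 := mul_le_mul_of_nonneg_right h (pow_pos hr 3).le
      _ = r^3 * g (t/r) := mul_comm _ _

lemma lame_identity (μ lam : ℝ) (hμ : 0 < μ) (hlam : 0 < lam + μ) (τ ξ : ℝ) :
    lameDet μ lam τ ξ *
      ((Complex.I * (τ:ℂ) + 2 * (μ:ℂ) * (ξ:ℂ)^2)^2
        + 4 * (μ:ℂ)^2 * (ξ:ℂ)^2
          * csqrt (Complex.I * (τ:ℂ) / ((lam:ℂ) + 2 * (μ:ℂ)) + (ξ:ℂ)^2)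
          * csqrt (Complex.I * (τ:ℂ) / (μ:ℂ) + (ξ:ℂ)^2))
    = Complex.I * (τ:ℂ) *
      (((16*μ^3*(lam+μ)/(lam+2*μ)*ξ^6 - 8*μ*ξ^2*τ^2 : ℝ) : ℂ)
        + ((8*μ^2*(3*lam+4*μ)/(lam+2*μ)*ξ^4*τ - τ^3 : ℝ) : ℂ) * Complex.I) := by
  have hν : (0:ℝ) < lam + 2*μ := by linarith
  have hνc : (lam:ℂ) + 2*(μ:ℂ) ≠ 0 := by
    have : ((lam + 2*μ : ℝ) : ℂ) ≠ 0 := by exact_mod_cast hν.ne'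
    push_cast at this
    exact this
  have hμc : (μ:ℂ) ≠ 0 := by exact_mod_cast hμ.ne'
  have h1 := csqrt_mul_self (Complex.I * (τ:ℂ) / ((lam:ℂ) + 2 * (μ:ℂ)) + (ξ:ℂ)^2)
  have h2 := csqrt_mul_self (Complex.I * (τ:ℂ) / (μ:ℂ) + (ξ:ℂ)^2)
  set l1 := csqrt (Complex.I * (τ:ℂ) / ((lam:ℂ) + 2 * (μ:ℂ)) + (ξ:ℂ)^2)
  set l2 := csqrt (Complex.I * (τ:ℂ) / (μ:ℂ) + (ξ:ℂ)^2)
  unfold lameDet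
  push_cast
  have expand : ((Complex.I * (τ:ℂ) + 2 * (μ:ℂ) * (ξ:ℂ)^2)^2
      - 4 * (μ:ℂ)^2 * (ξ:ℂ)^2 * l1 * l2) *
      ((Complex.I * (τ:ℂ) + 2 * (μ:ℂ) * (ξ:ℂ)^2)^2
      + 4 * (μ:ℂ)^2 * (ξ:ℂ)^2 * l1 * l2)
    = (Complex.I * (τ:ℂ) + 2 * (μ:ℂ) * (ξ:ℂ)^2)^4
      - 16 * (μ:ℂ)^4 * (ξ:ℂ)^4 * (l1*l1) * (l2*l2) := by ring
  rw [expand, h1, h2]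
  have hI3 : Complex.I^3 = -Complex.I := by
    rw [pow_succ, Complex.I_sq]; ring
  have hI4 : Complex.I^4 = 1 := by
    rw [pow_succ, hI3]; simp [Complex.I_mul_I]
  field_simp
  ring_nf
  simp only [hI3, hI4, Complex.I_sq, one_mul, neg_mul, neg_neg]
  ring

lemma lame_upper (μ lam : ℝ) (hμ : 0 < μ) (hlam : 0 < lam + μ) (τ ξ : ℝ) :
    ‖4 * (μ:ℂ)^2 * (ξ:ℂ)^2
        * csqrt (Complex.I * (τ:ℂ) / ((lam:ℂ) + 2 * (μ:ℂ)) + (ξ:ℂ)^2)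
        * csqrt (Complex.I * (τ:ℂ) / (μ:ℂ) + (ξ:ℂ)^2)‖ ≤ 6*(τ^2+μ^2*ξ^4) := by
  have hν : (0:ℝ) < lam + 2*μ := by linarith
  set A1 := ‖csqrt (Complex.I * (τ:ℂ) / ((lam:ℂ) + 2 * (μ:ℂ)) + (ξ:ℂ)^2)‖ with hA1def
  set A2 := ‖csqrt (Complex.I * (τ:ℂ) / (μ:ℂ) + (ξ:ℂ)^2)‖ with hA2def
  have hA1 : 0 ≤ A1 := norm_nonneg _
  have hA2 : 0 ≤ A2 := norm_nonneg _
  have hcast : ((lam:ℂ) + 2*(μ:ℂ)) = ((lam + 2*μ : ℝ) : ℂ) := by push_cast; ring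
  have habs1 : A1^2 ≤ |τ|/(lam+2*μ) + ξ^2 := by
    have e1 : A1^2 = ‖Complex.I * (τ:ℂ) / ((lam:ℂ) + 2 * (μ:ℂ)) + (ξ:ℂ)^2‖ := by
      rw [hA1def, sq, ← norm_mul, csqrt_mul_self]
    rw [e1]
    calc ‖Complex.I * (τ:ℂ) / ((lam:ℂ) + 2 * (μ:ℂ)) + (ξ:ℂ)^2‖
        ≤ ‖Complex.I * (τ:ℂ) / ((lam:ℂ) + 2 * (μ:ℂ))‖ + ‖(ξ:ℂ)^2‖ :=
          norm_add_le _ _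
      _ = |τ|/(lam+2*μ) + ξ^2 := by
          rw [norm_div, norm_mul, Complex.norm_I, hcast, Complex.norm_real, Real.norm_eq_abs, norm_pow,
            Complex.norm_real, Real.norm_eq_abs, one_mul, Complex.norm_real, Real.norm_eq_abs, abs_of_pos hν, sq_abs]
  have habs2 : A2^2 ≤ |τ|/μ + ξ^2 := by
    have e1 : A2^2 = ‖Complex.I * (τ:ℂ) / (μ:ℂ) + (ξ:ℂ)^2‖ := by
      rw [hA2def, sq, ← norm_mul, csqrt_mul_self]
    rw [e1]
    calc ‖Complex.I * (τ:ℂ) / (μ:ℂ) + (ξ:ℂ)^2‖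
        ≤ ‖Complex.I * (τ:ℂ) / (μ:ℂ)‖ + ‖(ξ:ℂ)^2‖ :=
          norm_add_le _ _
      _ = |τ|/μ + ξ^2 := by
          rw [norm_div, norm_mul, Complex.norm_I, Complex.norm_real, Real.norm_eq_abs, norm_pow,
            Complex.norm_real, Real.norm_eq_abs, one_mul, Complex.norm_real, Real.norm_eq_abs, abs_of_pos hμ, sq_abs]
  have hb1 : μ * A1^2 ≤ |τ| + μ*ξ^2 := by
    have h1 : μ * (|τ|/(lam+2*μ) + ξ^2) ≤ |τ| + μ*ξ^2 := by
      have : μ * (|τ|/(lam+2*μ)) ≤ |τ| := by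
        rw [mul_comm, div_mul_eq_mul_div, div_le_iff₀ hν]
        nlinarith [abs_nonneg τ]
      nlinarith
    nlinarith [habs1]
  have hb2 : μ * A2^2 ≤ |τ| + μ*ξ^2 := by
    have h1 : μ * (|τ|/μ + ξ^2) ≤ |τ| + μ*ξ^2 := by
      rw [mul_add, mul_div_cancel₀ _ hμ.ne']
    nlinarith [habs2]
  have heq : ‖4 * (μ:ℂ)^2 * (ξ:ℂ)^2
        * csqrt (Complex.I * (τ:ℂ) / ((lam:ℂ) + 2 * (μ:ℂ)) + (ξ:ℂ)^2)
        * csqrt (Complex.I * (τ:ℂ) / (μ:ℂ) + (ξ:ℂ)^2)‖ = 4*μ^2*ξ^2*A1*A2 := by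
    simp [norm_mul, norm_pow, Complex.norm_real, Real.norm_eq_abs, sq_abs, abs_of_pos hμ, hA1def, hA2def]
  rw [heq]
  nlinarith [mul_le_mul_of_nonneg_left hb1 (by positivity : (0:ℝ) ≤ 2*μ*ξ^2),
    mul_le_mul_of_nonneg_left hb2 (by positivity : (0:ℝ) ≤ 2*μ*ξ^2),
    mul_nonneg (by positivity : (0:ℝ) ≤ 2*μ^2*ξ^2) (sq_nonneg (A1-A2)),
    sq_nonneg (|τ| - μ*ξ^2), sq_abs τ, abs_nonneg τ, sq_nonneg ξ, hμ]

lemma lame_P2 (μ τ ξ : ℝ) :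
    ‖(Complex.I * (τ:ℂ) + 2 * (μ:ℂ) * (ξ:ℂ)^2)^2‖ = τ^2 + 4*μ^2*ξ^4 := by
  have e : (Complex.I * (τ:ℂ) + 2 * (μ:ℂ) * (ξ:ℂ)^2)
      = Complex.ofReal (2*μ*ξ^2) + Complex.ofReal τ * Complex.I := by push_cast; ring
  rw [e, norm_pow, Complex.norm_add_mul_I, Real.sq_sqrt (by positivity)]
  ring

/-- nondegeneracy and two-sided bounds for the Lopatinskii determinant of
the Lamé system in the half-plane: for `μ > 0` and `λ + μ > 0`, `det𝒜(τ,ξ₁) = 0` iff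
`τ = 0`, and there exist `0 < c < C` with
`c|τ|√(τ²+μ²ξ₁⁴) ≤ |det𝒜(τ,ξ₁)| ≤ C(τ²+μ²ξ₁⁴)` for all `(τ,ξ₁) ∈ ℝ²`. -/
theorem lame_lopatinskii_determinant
    (μ lam : ℝ) (hμ : 0 < μ) (hlam : 0 < lam + μ) :
    (∀ τ ξ : ℝ, lameDet μ lam τ ξ = 0 ↔ τ = 0) ∧
    ∃ c C : ℝ, 0 < c ∧ c < C ∧ ∀ τ ξ : ℝ,
      c * |τ| * Real.sqrt (τ^2 + μ^2 * ξ^4) ≤ ‖lameDet μ lam τ ξ‖ ∧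
        ‖lameDet μ lam τ ξ‖ ≤ C * (τ^2 + μ^2 * ξ^4) := by
  have hν : (0:ℝ) < lam + 2*μ := by linarith
  set Breal := 8*μ^2*(3*lam+4*μ)/(lam+2*μ) with hBdef
  set Dreal := 16*μ^3*(lam+μ)/(lam+2*μ) with hDdef
  have hD : 0 < Dreal := div_pos (by nlinarith [pow_pos hμ 3]) hν
  have hne : Dreal ≠ 8*μ*Breal := by
    rw [hDdef, hBdef]
    intro h
    field_simp at h
    rw [div_left_inj' (show lam + μ*2 ≠ 0 by linarith)] at h
    nlinarith [mul_pos (pow_pos hμ 3) (show (0:ℝ) < 11*lam+15*μ by linarith)]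
  obtain ⟨m, hm, hf⟩ := poly_lower μ Breal Dreal hμ hD hne
  set c := Real.sqrt m / 10 with hcdef
  have hc : 0 < c := by
    rw [hcdef]
    positivity
  -- upper bound for the determinant and for the conjugate factor
  have hupper : ∀ τ ξ : ℝ, ‖lameDet μ lam τ ξ‖ ≤ 10*(τ^2+μ^2*ξ^4) := by
    intro τ ξ
    have h1 : ‖lameDet μ lam τ ξ‖
        ≤ ‖(Complex.I * (τ:ℂ) + 2 * (μ:ℂ) * (ξ:ℂ)^2)^2‖
          + ‖4 * (μ:ℂ)^2 * (ξ:ℂ)^2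
            * csqrt (Complex.I * (τ:ℂ) / ((lam:ℂ) + 2 * (μ:ℂ)) + (ξ:ℂ)^2)
            * csqrt (Complex.I * (τ:ℂ) / (μ:ℂ) + (ξ:ℂ)^2)‖ := by
      rw [lameDet, sub_eq_add_neg]
      refine le_trans (norm_add_le _ _) ?_
      rw [norm_neg]
    have h2 := lame_upper μ lam hμ hlam τ ξ
    have h3 := lame_P2 μ τ ξ
    nlinarith [sq_nonneg τ]
  have hMupper : ∀ τ ξ : ℝ, ‖(Complex.I * (τ:ℂ) + 2 * (μ:ℂ) * (ξ:ℂ)^2)^2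
        + 4 * (μ:ℂ)^2 * (ξ:ℂ)^2
          * csqrt (Complex.I * (τ:ℂ) / ((lam:ℂ) + 2 * (μ:ℂ)) + (ξ:ℂ)^2)
          * csqrt (Complex.I * (τ:ℂ) / (μ:ℂ) + (ξ:ℂ)^2)‖ ≤ 10*(τ^2+μ^2*ξ^4) := by
    intro τ ξ
    have h1 := norm_add_le ((Complex.I * (τ:ℂ) + 2 * (μ:ℂ) * (ξ:ℂ)^2)^2)
      (4 * (μ:ℂ)^2 * (ξ:ℂ)^2
        * csqrt (Complex.I * (τ:ℂ) / ((lam:ℂ) + 2 * (μ:ℂ)) + (ξ:ℂ)^2)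
        * csqrt (Complex.I * (τ:ℂ) / (μ:ℂ) + (ξ:ℂ)^2))
    have h2 := lame_upper μ lam hμ hlam τ ξ
    have h3 := lame_P2 μ τ ξ
    nlinarith [sq_nonneg τ]
  -- lower bound
  have hlower : ∀ τ ξ : ℝ, c * |τ| * Real.sqrt (τ^2 + μ^2 * ξ^4)
      ≤ ‖lameDet μ lam τ ξ‖ := by
    intro τ ξ
    have hQ0 : (0:ℝ) ≤ τ^2 + μ^2*ξ^4 := by positivity
    rcases eq_or_lt_of_le hQ0 with hQ | hQ
    · have hτ : τ = 0 := by nlinarith [sq_nonneg τ, sq_nonneg (μ*ξ^2)]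
      simp [hτ, norm_nonneg]
    · set Q := τ^2 + μ^2*ξ^4 with hQdef
      set x := Dreal*ξ^6 - 8*μ*ξ^2*τ^2 with hxdef
      set y := Breal*ξ^4*τ - τ^3 with hydef
      have hid := lame_identity μ lam hμ hlam τ ξ
      have habs : ‖lameDet μ lam τ ξ‖ * ‖(Complex.I * (τ:ℂ) + 2 * (μ:ℂ) * (ξ:ℂ)^2)^2
            + 4 * (μ:ℂ)^2 * (ξ:ℂ)^2
              * csqrt (Complex.I * (τ:ℂ) / ((lam:ℂ) + 2 * (μ:ℂ)) + (ξ:ℂ)^2)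
              * csqrt (Complex.I * (τ:ℂ) / (μ:ℂ) + (ξ:ℂ)^2)‖
          = |τ| * Real.sqrt (x^2 + y^2) := by
        rw [← norm_mul, hid]
        have ex : (16*μ^3*(lam+μ)/(lam+2*μ)*ξ^6 - 8*μ*ξ^2*τ^2 : ℝ) = x := by
          rw [hxdef, hDdef]
        have ey : (8*μ^2*(3*lam+4*μ)/(lam+2*μ)*ξ^4*τ - τ^3 : ℝ) = y := by
          rw [hydef, hBdef]
        rw [ex, ey, norm_mul, norm_mul, Complex.norm_I, Complex.norm_real, Real.norm_eq_abs,
          Complex.norm_add_mul_I, one_mul]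
      have hfle : m*Q^3 ≤ x^2 + y^2 := by
        have h0 := hf (τ^2) (ξ^4) (sq_nonneg τ) (by positivity)
        have e : ξ^4*(Dreal*ξ^4-8*μ*τ^2)^2 + τ^2*(Breal*ξ^4-τ^2)^2 = x^2+y^2 := by
          rw [hxdef, hydef]; ring
        rw [e] at h0
        have e2 : τ^2 + μ^2*ξ^4 = Q := hQdef.symm
        rw [e2] at h0
        exact h0
      have hWlow : Real.sqrt m * Q * Real.sqrt Q ≤ Real.sqrt (x^2+y^2) := by
        have h1 : Real.sqrt (m*Q^3) ≤ Real.sqrt (x^2+y^2) := Real.sqrt_le_sqrt hfle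
        have h2 : Real.sqrt (m*Q^3) = Real.sqrt m * Q * Real.sqrt Q := by
          rw [show m*Q^3 = m*(Q^2*Q) by ring, Real.sqrt_mul hm.le,
            Real.sqrt_mul (sq_nonneg Q), Real.sqrt_sq hQ0]
          ring
        linarith [h1, h2.symm.le]
      have hMle := hMupper τ ξ
      have h2 : Real.sqrt m * Q * Real.sqrt Q * |τ|
          ≤ ‖lameDet μ lam τ ξ‖ * (10*Q) := by
        calc Real.sqrt m * Q * Real.sqrt Q * |τ|
            ≤ Real.sqrt (x^2+y^2) * |τ| := mul_le_mul_of_nonneg_right hWlow (abs_nonneg τ)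
          _ = ‖lameDet μ lam τ ξ‖ * ‖(Complex.I * (τ:ℂ) + 2 * (μ:ℂ) * (ξ:ℂ)^2)^2
                + 4 * (μ:ℂ)^2 * (ξ:ℂ)^2
                  * csqrt (Complex.I * (τ:ℂ) / ((lam:ℂ) + 2 * (μ:ℂ)) + (ξ:ℂ)^2)
                  * csqrt (Complex.I * (τ:ℂ) / (μ:ℂ) + (ξ:ℂ)^2)‖ := by
              rw [habs]; ring
          _ ≤ ‖lameDet μ lam τ ξ‖ * (10*Q) :=
              mul_le_mul_of_nonneg_left hMle (norm_nonneg _)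
      have h3 : Real.sqrt m * Real.sqrt Q * |τ| ≤ 10 * ‖lameDet μ lam τ ξ‖ := by
        have h4 : (Real.sqrt m * Real.sqrt Q * |τ|) * Q
            ≤ (10 * ‖lameDet μ lam τ ξ‖) * Q := by nlinarith [h2]
        exact le_of_mul_le_mul_right h4 hQ
      rw [hcdef]
      nlinarith [h3]
  constructor
  · intro τ ξ
    constructor
    · intro h
      by_contra hτ
      have h1 : 0 < |τ| := abs_pos.mpr hτ
      have hQpos : 0 < τ^2 + μ^2*ξ^4 := by nlinarith [sq_abs τ, sq_nonneg (μ*ξ^2)]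
      have h2 := hlower τ ξ
      rw [h, norm_zero] at h2
      nlinarith [mul_pos (mul_pos hc h1) (Real.sqrt_pos.mpr hQpos)]
    · intro h
      subst h
      have e1 : Complex.I * ((0:ℝ):ℂ) / ((lam:ℂ) + 2*(μ:ℂ)) + (ξ:ℂ)^2 = (ξ:ℂ)^2 := by simp
      have e2 : Complex.I * ((0:ℝ):ℂ) / (μ:ℂ) + (ξ:ℂ)^2 = (ξ:ℂ)^2 := by simp
      rw [lameDet, e1, e2]
      push_cast
      linear_combination (-(4*(μ:ℂ)^2*(ξ:ℂ)^2)) * (csqrt_mul_self ((ξ:ℂ)^2))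
  · refine ⟨c, c+10, hc, by linarith, fun τ ξ => ⟨hlower τ ξ, ?_⟩⟩
    have h1 := hupper τ ξ
    have hQ0 : (0:ℝ) ≤ τ^2 + μ^2*ξ^4 := by positivity
    nlinarith [hc]
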